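/- Substitution theorem for formulas (Theorem 2): Let A and B be formulas, let C_A be a formula containing a designated occurrence of A, and let C_B be the result of replacing that occurrence of A in C_A by B. Then from the four R-expressions constituting A ⇔ˢ B taken as premises, each of the four R-expressions constituting C_A ⇔ˢ C_B is derivable in SC∞; i.e., A ⇔ˢ B ⊢ C_A ⇔ˢ C_B. -/
import Mathlib


/-- Formulas of the connexive logic C: propositional variables, strong
negation `∼`, conjunction, disjunction and implication. -/
inductive Formula : Type
  | var : Nat → Formula
  | snot : Formula → Formula
  | and : Formula → Formula → Formula
  | or : Formula → Formula → Formula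
  | imp : Formula → Formula → Formula
deriving DecidableEq

/-- R-expressions over the language of C.  `fm A` is the formula `A`,
`negFm A` is `−A`, `seq Δ S` is `(Δ ⇒ S)` and `negSeq Δ S` is `−(Δ ⇒ S)`.
The convention `−−S = S` is implemented by the involution `rneg`. -/
inductive RExpr : Type
  | fm : Formula → RExpr
  | negFm : Formula → RExpr
  | seq : List RExpr → RExpr → RExpr
  | negSeq : List RExpr → RExpr → RExpr

/-- The refutation `−S` of an R-expression, with `−−S = S`. -/
def rneg : RExpr → RExpr
  | .fm A => .negFm A
  | .negFm A => .fm A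
  | .seq Δ S => .negSeq Δ S
  | .negSeq Δ S => .seq Δ S

/-- Derivability in the higher-order sequent calculus `SC∞` from a set `P`
of R-expressions taken as additional premises. -/
inductive SC (P : Set RExpr) : RExpr → Prop
  | prem {S} : S ∈ P → SC P S
  | rf (S) : SC P (.seq [S] S)
  | wl {Δ S} (T) : SC P (.seq Δ S) → SC P (.seq (Δ ++ [T]) S)
  | pl {U} (Δ S T Γ) : SC P (.seq (Δ ++ S :: T :: Γ) U) → SC P (.seq (Δ ++ T :: S :: Γ) U)
  | cl {Δ S T} : SC P (.seq (Δ ++ [S, S]) T) → SC P (.seq (Δ ++ [S]) T)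
  | cut {Δ S T} : SC P (.seq Δ S) → SC P (.seq (Δ ++ [S]) T) → SC P (.seq Δ T)
  | riP {Γ Δ S} : SC P (.seq (Γ ++ Δ) S) → SC P (.seq Γ (.seq Δ S))
  | liP {Γ Δ S T} : (∀ U ∈ Δ, SC P (.seq Γ U)) → SC P (.seq (Γ ++ [S]) T) →
      SC P (.seq (Γ ++ [.seq Δ S]) T)
  | riN {Δ Γ S} : SC P (.seq (Δ ++ Γ) (rneg S)) → SC P (.seq Δ (rneg (.seq Γ S)))
  | riN' {Δ Γ S} : SC P (.seq Δ (rneg (.seq Γ S))) → SC P (.seq (Δ ++ Γ) (rneg S))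
  | liN {Δ Γ S T} : (∀ U ∈ Γ, SC P (.seq Δ U)) → SC P (.seq (Δ ++ [rneg S]) T) →
      SC P (.seq (Δ ++ [rneg (.seq Γ S)]) T)
  | snotL {Δ A S} : SC P (.seq (Δ ++ [.negFm A]) S) → SC P (.seq (Δ ++ [.fm (.snot A)]) S)
  | snotR {Δ A} : SC P (.seq Δ (.negFm A)) → SC P (.seq Δ (.fm (.snot A)))
  | snotLm {Δ A S} : SC P (.seq (Δ ++ [.fm A]) S) → SC P (.seq (Δ ++ [.negFm (.snot A)]) S)
  | snotRm {Δ A} : SC P (.seq Δ (.fm A)) → SC P (.seq Δ (.negFm (.snot A)))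
  | andL {Δ A B S} : SC P (.seq (Δ ++ [.fm A, .fm B]) S) → SC P (.seq (Δ ++ [.fm (.and A B)]) S)
  | andR {Δ A B} : SC P (.seq Δ (.fm A)) → SC P (.seq Δ (.fm B)) → SC P (.seq Δ (.fm (.and A B)))
  | andLm {Δ A B S} : SC P (.seq (Δ ++ [.negFm A]) S) → SC P (.seq (Δ ++ [.negFm B]) S) →
      SC P (.seq (Δ ++ [.negFm (.and A B)]) S)
  | andRm₁ {Δ A B} : SC P (.seq Δ (.negFm A)) → SC P (.seq Δ (.negFm (.and A B)))
  | andRm₂ {Δ A B} : SC P (.seq Δ (.negFm B)) → SC P (.seq Δ (.negFm (.and A B)))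
  | orL {Δ A B S} : SC P (.seq (Δ ++ [.fm A]) S) → SC P (.seq (Δ ++ [.fm B]) S) →
      SC P (.seq (Δ ++ [.fm (.or A B)]) S)
  | orR₁ {Δ A B} : SC P (.seq Δ (.fm A)) → SC P (.seq Δ (.fm (.or A B)))
  | orR₂ {Δ A B} : SC P (.seq Δ (.fm B)) → SC P (.seq Δ (.fm (.or A B)))
  | orLm {Δ A B S} : SC P (.seq (Δ ++ [.negFm A, .negFm B]) S) →
      SC P (.seq (Δ ++ [.negFm (.or A B)]) S)
  | orRm {Δ A B} : SC P (.seq Δ (.negFm A)) → SC P (.seq Δ (.negFm B)) →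
      SC P (.seq Δ (.negFm (.or A B)))
  | impL {Δ A B S} : SC P (.seq (Δ ++ [.seq [.fm A] (.fm B)]) S) →
      SC P (.seq (Δ ++ [.fm (.imp A B)]) S)
  | impR {Δ A B} : SC P (.seq Δ (.seq [.fm A] (.fm B))) → SC P (.seq Δ (.fm (.imp A B)))
  | impLm {Δ A B S} : SC P (.seq (Δ ++ [.negSeq [.fm A] (.fm B)]) S) →
      SC P (.seq (Δ ++ [.negFm (.imp A B)]) S)
  | impRm {Δ A B} : SC P (.seq Δ (.negSeq [.fm A] (.fm B))) → SC P (.seq Δ (.negFm (.imp A B)))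

/-- `S ⇔ˢ T` relative to the premise set `P`: the four R-expressions
`S ⇒ T`, `T ⇒ S`, `−S ⇒ −T`, `−T ⇒ −S` are each derivable from `P`. -/
def StrictEquiv (P : Set RExpr) (S T : RExpr) : Prop :=
  SC P (.seq [S] T) ∧ SC P (.seq [T] S) ∧
  SC P (.seq [rneg S] (rneg T)) ∧ SC P (.seq [rneg T] (rneg S))

/-- The four R-expressions constituting `S ⇔ˢ T`, taken as premises. -/
def equivPrems (S T : RExpr) : Set RExpr :=
  {RExpr.seq [S] T, RExpr.seq [T] S, RExpr.seq [rneg S] (rneg T), RExpr.seq [rneg T] (rneg S)}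
/-- `ReplF A B C D`: the formula `C` contains a designated occurrence of the
formula `A`, and `D` is the result of replacing that occurrence by `B`. -/
inductive ReplF (A B : Formula) : Formula → Formula → Prop
  | here : ReplF A B A B
  | snot {C D} : ReplF A B C D → ReplF A B (.snot C) (.snot D)
  | andLeft {C D} (E) : ReplF A B C D → ReplF A B (.and C E) (.and D E)
  | andRight {C D} (E) : ReplF A B C D → ReplF A B (.and E C) (.and E D)
  | orLeft {C D} (E) : ReplF A B C D → ReplF A B (.or C E) (.or D E)
  | orRight {C D} (E) : ReplF A B C D → ReplF A B (.or E C) (.or E D)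
  | impLeft {C D} (E) : ReplF A B C D → ReplF A B (.imp C E) (.imp D E)
  | impRight {C D} (E) : ReplF A B C D → ReplF A B (.imp E C) (.imp E D)

namespace SCsub

variable {P : Set RExpr}

/-- Repeated left weakening. -/
lemma wls {Δ : List RExpr} {S : RExpr} (Γ : List RExpr) (h : SC P (.seq Δ S)) :
    SC P (.seq (Δ ++ Γ) S) := by
  induction Γ generalizing Δ with
  | nil => simpa using h
  | cons x Γ ih =>
      have := ih (Δ := Δ ++ [x]) (SC.wl x h)
      simpa [List.append_assoc] using this

/-- Move an element across a block, by repeated permutation. -/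
lemma move {X S : RExpr} {Δ : List RExpr} (Γ : List RExpr)
    (h : SC P (.seq (Γ ++ X :: Δ) S)) : SC P (.seq ((Γ ++ Δ) ++ [X]) S) := by
  induction Δ generalizing Γ with
  | nil => simpa using h
  | cons y Δ ih =>
      have h2 := SC.pl Γ X y Δ h
      have := ih (Γ := Γ ++ [y]) (by simpa [List.append_assoc] using h2)
      simpa [List.append_assoc] using this

/-- From `[X] ⇒ S` derive `Δ ++ [X] ⇒ S`. -/
lemma ext {X S : RExpr} (Δ : List RExpr) (h : SC P (.seq [X] S)) :
    SC P (.seq (Δ ++ [X]) S) := by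
  have h1 := wls Δ h
  have h2 := move (Γ := []) (Δ := Δ) (by simpa using h1)
  simpa using h2

/-- Weakened reflexivity. -/
lemma rfw (Δ : List RExpr) (X : RExpr) : SC P (.seq (Δ ++ [X]) X) :=
  ext Δ (SC.rf X)

/-- Symmetry of strict equivalence. -/
lemma seSymm {S T : RExpr} (h : StrictEquiv P S T) : StrictEquiv P T S :=
  ⟨h.2.1, h.1, h.2.2.2, h.2.2.1⟩

/- Forward components for each connective. -/

lemma snot1 {C D : Formula} (h : StrictEquiv P (.fm C) (.fm D)) :
    SC P (.seq [.fm (.snot C)] (.fm (.snot D))) :=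
  SC.snotL (Δ := []) (SC.snotR h.2.2.1)

lemma snot3 {C D : Formula} (h : StrictEquiv P (.fm C) (.fm D)) :
    SC P (.seq [.negFm (.snot C)] (.negFm (.snot D))) :=
  SC.snotLm (Δ := []) (SC.snotRm h.1)

lemma andL1 {C D : Formula} (E : Formula) (h : StrictEquiv P (.fm C) (.fm D)) :
    SC P (.seq [.fm (.and C E)] (.fm (.and D E))) :=
  SC.andL (Δ := []) (SC.andR (SC.wl (.fm E) h.1) (rfw [.fm C] (.fm E)))

lemma andL3 {C D : Formula} (E : Formula) (h : StrictEquiv P (.fm C) (.fm D)) :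
    SC P (.seq [.negFm (.and C E)] (.negFm (.and D E))) :=
  SC.andLm (Δ := []) (SC.andRm₁ h.2.2.1) (SC.andRm₂ (SC.rf (.negFm E)))

lemma andR1 {C D : Formula} (E : Formula) (h : StrictEquiv P (.fm C) (.fm D)) :
    SC P (.seq [.fm (.and E C)] (.fm (.and E D))) :=
  SC.andL (Δ := []) (SC.andR (SC.wl (.fm C) (SC.rf (.fm E))) (ext [.fm E] h.1))

lemma andR3 {C D : Formula} (E : Formula) (h : StrictEquiv P (.fm C) (.fm D)) :
    SC P (.seq [.negFm (.and E C)] (.negFm (.and E D))) :=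
  SC.andLm (Δ := []) (SC.andRm₁ (SC.rf (.negFm E))) (SC.andRm₂ h.2.2.1)

lemma orL1 {C D : Formula} (E : Formula) (h : StrictEquiv P (.fm C) (.fm D)) :
    SC P (.seq [.fm (.or C E)] (.fm (.or D E))) :=
  SC.orL (Δ := []) (SC.orR₁ h.1) (SC.orR₂ (SC.rf (.fm E)))

lemma orL3 {C D : Formula} (E : Formula) (h : StrictEquiv P (.fm C) (.fm D)) :
    SC P (.seq [.negFm (.or C E)] (.negFm (.or D E))) :=
  SC.orLm (Δ := []) (SC.orRm (SC.wl (.negFm E) h.2.2.1) (rfw [.negFm C] (.negFm E)))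

lemma orR1 {C D : Formula} (E : Formula) (h : StrictEquiv P (.fm C) (.fm D)) :
    SC P (.seq [.fm (.or E C)] (.fm (.or E D))) :=
  SC.orL (Δ := []) (SC.orR₁ (SC.rf (.fm E))) (SC.orR₂ h.1)

lemma orR3 {C D : Formula} (E : Formula) (h : StrictEquiv P (.fm C) (.fm D)) :
    SC P (.seq [.negFm (.or E C)] (.negFm (.or E D))) :=
  SC.orLm (Δ := []) (SC.orRm (SC.wl (.negFm C) (SC.rf (.negFm E))) (ext [.negFm E] h.2.2.1))

lemma impL1 {C D : Formula} (E : Formula) (h : StrictEquiv P (.fm C) (.fm D)) :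
    SC P (.seq [.fm (.imp C E)] (.fm (.imp D E))) := by
  apply SC.impL (Δ := [])
  apply SC.impR
  apply SC.riP (Γ := [.seq [.fm C] (.fm E)]) (Δ := [.fm D])
  -- goal: [seq [C] E, fm D] ⇒ fm E
  have h1 : SC P (.seq ([.fm D] ++ [RExpr.seq [.fm C] (.fm E)]) (.fm E)) := by
    apply SC.liP
    · intro U hU
      simp only [List.mem_singleton] at hU
      subst hU
      exact h.2.1
    · exact rfw [.fm D] (.fm E)
  exact SC.pl [] (.fm D) (.seq [.fm C] (.fm E)) [] h1

lemma impL3 {C D : Formula} (E : Formula) (h : StrictEquiv P (.fm C) (.fm D)) :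
    SC P (.seq [.negFm (.imp C E)] (.negFm (.imp D E))) := by
  apply SC.impLm (Δ := [])
  apply SC.impRm
  have goal2 : SC P (.seq ([.negSeq [.fm C] (.fm E)] ++ [.fm D]) (rneg (.fm E))) := by
    have h1 : SC P (.seq ([.fm D] ++ [rneg (RExpr.seq [.fm C] (.fm E))]) (.negFm E)) := by
      apply SC.liN
      · intro U hU
        simp only [List.mem_singleton] at hU
        subst hU
        exact h.2.1
      · exact rfw [.fm D] (.negFm E)
    exact SC.pl [] (.fm D) (.negSeq [.fm C] (.fm E)) [] h1
  have := SC.riN (Δ := [.negSeq [.fm C] (.fm E)]) (Γ := [.fm D]) (S := .fm E) goal2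
  exact this

lemma impR1 {C D : Formula} (E : Formula) (h : StrictEquiv P (.fm C) (.fm D)) :
    SC P (.seq [.fm (.imp E C)] (.fm (.imp E D))) := by
  apply SC.impL (Δ := [])
  apply SC.impR
  apply SC.riP (Γ := [.seq [.fm E] (.fm C)]) (Δ := [.fm E])
  -- goal: [seq [E] C, fm E] ⇒ fm D
  have h1 : SC P (.seq ([.fm E] ++ [RExpr.seq [.fm E] (.fm C)]) (.fm C)) := by
    apply SC.liP
    · intro U hU
      simp only [List.mem_singleton] at hU
      subst hU
      exact SC.rf (.fm E)
    · exact SC.pl [] (.fm C) (.fm E) [] (SC.wl (.fm E) (SC.rf (.fm C)))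
  have h2 := SC.pl [] (.fm E) (.seq [.fm E] (.fm C)) [] h1
  exact SC.cut h2 (ext [RExpr.seq [.fm E] (.fm C), .fm E] h.1)

lemma impR3 {C D : Formula} (E : Formula) (h : StrictEquiv P (.fm C) (.fm D)) :
    SC P (.seq [.negFm (.imp E C)] (.negFm (.imp E D))) := by
  apply SC.impLm (Δ := [])
  apply SC.impRm
  have h1 : SC P (.seq ([RExpr.negSeq [.fm E] (.fm C)] ++ [.fm E]) (rneg (.fm C))) :=
    SC.riN' (Δ := [.negSeq [.fm E] (.fm C)]) (Γ := [.fm E]) (S := .fm C)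
      (SC.rf (.negSeq [.fm E] (.fm C)))
  have h2 := SC.cut h1 (ext [RExpr.negSeq [.fm E] (.fm C), .fm E] h.2.2.1)
  exact SC.riN (Δ := [.negSeq [.fm E] (.fm C)]) (Γ := [.fm E]) (S := .fm D) h2

end SCsub

/-- Theorem 2 (substitution theorem for formulas):
`A ⇔ˢ B ⊢ C_A ⇔ˢ C_B`. -/
theorem substitution_formulas (A B CA CB : Formula) (h : ReplF A B CA CB) :
    StrictEquiv (equivPrems (.fm A) (.fm B)) (.fm CA) (.fm CB) := by
  induction h with
  | here =>
      refine ⟨SC.prem ?_, SC.prem ?_, SC.prem ?_, SC.prem ?_⟩ <;>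
        simp [equivPrems, rneg]
  | snot ih ih2 =>
      exact ⟨SCsub.snot1 ih2, SCsub.snot1 (SCsub.seSymm ih2),
        SCsub.snot3 ih2, SCsub.snot3 (SCsub.seSymm ih2)⟩
  | andLeft E ih ih2 =>
      exact ⟨SCsub.andL1 E ih2, SCsub.andL1 E (SCsub.seSymm ih2),
        SCsub.andL3 E ih2, SCsub.andL3 E (SCsub.seSymm ih2)⟩
  | andRight E ih ih2 =>
      exact ⟨SCsub.andR1 E ih2, SCsub.andR1 E (SCsub.seSymm ih2),
        SCsub.andR3 E ih2, SCsub.andR3 E (SCsub.seSymm ih2)⟩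
  | orLeft E ih ih2 =>
      exact ⟨SCsub.orL1 E ih2, SCsub.orL1 E (SCsub.seSymm ih2),
        SCsub.orL3 E ih2, SCsub.orL3 E (SCsub.seSymm ih2)⟩
  | orRight E ih ih2 =>
      exact ⟨SCsub.orR1 E ih2, SCsub.orR1 E (SCsub.seSymm ih2),
        SCsub.orR3 E ih2, SCsub.orR3 E (SCsub.seSymm ih2)⟩
  | impLeft E ih ih2 =>
      exact ⟨SCsub.impL1 E ih2, SCsub.impL1 E (SCsub.seSymm ih2),
        SCsub.impL3 E ih2, SCsub.impL3 E (SCsub.seSymm ih2)⟩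
  | impRight E ih ih2 =>
      exact ⟨SCsub.impR1 E ih2, SCsub.impR1 E (SCsub.seSymm ih2),
        SCsub.impR3 E ih2, SCsub.impR3 E (SCsub.seSymm ih2)⟩
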